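/- Let α > 0, q satisfy: q(0)=0, q non-decreasing on [0,∞) and strictly increasing and differentiable on (0,A) with 1/α < A ≤ ∞, and suppose Q(y) = ∫₀^y q(u)du + (1/α − y)q(y) has a unique root b ∈ (1/α, A). Let m ≥ 1, c > 0, and define Z_m = c and (n/(n+1))^{1/α} Z_{n+1} = (1/n)∫₀^n (q(y) ∧ Z_n) dy for n ≥ m. Then lim_{n→∞} Z_n = q(b). -/

import Mathlib

open Filter MeasureTheory intervalIntegral

lemma lemA14 (Z : ℕ → ℝ) (w δ : ℝ) (hδ : 0 < δ) (N : ℕ) (hN1 : 1 ≤ N)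
    (hstep : ∀ n, N ≤ n → Z n + δ / n ≤ Z (n + 1))
    (hub : ∀ n, N ≤ n → Z n ≤ w) : False := by
  have key : ∀ n, N ≤ n → Z N + δ * ∑ j ∈ Finset.Ico N n, (1 / (j : ℝ)) ≤ Z n := by
    intro n hn
    induction n, hn using Nat.le_induction with
    | base => simp
    | succ n hn ih =>
      rw [Finset.sum_Ico_succ_top hn, mul_add, mul_one_div]
      have h2 := hstep n hn
      linarith
  have hbdd : ∀ n, N ≤ n → ∑ j ∈ Finset.Ico N n, (1 / (j : ℝ)) ≤ (w - Z N) / δ := by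
    intro n hn
    rw [le_div_iff₀ hδ]
    have := key n hn
    have := hub n hn
    nlinarith
  obtain ⟨n, hn1, hn2⟩ := ((Filter.tendsto_atTop.mp Real.tendsto_sum_range_one_div_nat_succ_atTop
      ((w - Z N) / δ + 1 + ∑ j ∈ Finset.range N, (1 / ((j : ℝ) + 1)))).and
      (Filter.eventually_ge_atTop N)).exists
  have hsub : ∑ j ∈ Finset.Ico N n, (1 / ((j : ℝ) + 1)) =
      (∑ j ∈ Finset.range n, (1 / ((j : ℝ) + 1))) - ∑ j ∈ Finset.range N, (1 / ((j : ℝ) + 1)) :=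
    Finset.sum_Ico_eq_sub _ hn2
  have hcmp : ∑ j ∈ Finset.Ico N n, (1 / ((j : ℝ) + 1)) ≤ ∑ j ∈ Finset.Ico N n, (1 / (j : ℝ)) := by
    apply Finset.sum_le_sum
    intro j hj
    have hj1 : (1 : ℝ) ≤ (j : ℝ) := by
      have := (Finset.mem_Ico.mp hj).1
      exact_mod_cast hN1.trans this
    apply one_div_le_one_div_of_le (by linarith) (by linarith)
  have := hbdd n hn2
  linarith

lemma lemDown14 (Z : ℕ → ℝ) (w δ : ℝ) (hδ : 0 < δ) (N : ℕ) (hN1 : 1 ≤ N)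
    (hstay : ∀ n, N ≤ n → w ≤ Z n → w ≤ Z (n + 1))
    (hgrow : ∀ n, N ≤ n → Z n < w → Z n + δ / n ≤ Z (n + 1)) :
    ∃ N', ∀ n, N' ≤ n → w ≤ Z n := by
  have h0 : ∃ n₀, N ≤ n₀ ∧ w ≤ Z n₀ := by
    by_contra h
    push_neg at h
    exact lemA14 Z w δ hδ N hN1 (fun n hn => hgrow n hn (h n hn)) (fun n hn => (h n hn).le)
  obtain ⟨n₀, hn₀, hw⟩ := h0
  refine ⟨n₀, fun n hn => ?_⟩
  induction n, hn using Nat.le_induction with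
  | base => exact hw
  | succ n hn ih => exact hstay n (hn₀.trans hn) ih

lemma lemUp14 (Z : ℕ → ℝ) (w δ : ℝ) (hδ : 0 < δ) (N : ℕ) (hN1 : 1 ≤ N)
    (hstay : ∀ n, N ≤ n → Z n ≤ w → Z (n + 1) ≤ w)
    (hdec : ∀ n, N ≤ n → w < Z n → Z (n + 1) ≤ Z n - δ / n) :
    ∃ N', ∀ n, N' ≤ n → Z n ≤ w := by
  obtain ⟨N', h⟩ := lemDown14 (fun n => -Z n) (-w) δ hδ N hN1
    (fun n hn h1 => by
      have h1' : -w ≤ -Z n := h1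
      have := hstay n hn (by linarith)
      show -w ≤ -Z (n + 1)
      linarith)
    (fun n hn h1 => by
      have h1' : -Z n < -w := h1
      have := hdec n hn (by linarith)
      show -Z n + δ / n ≤ -Z (n + 1)
      linarith)
  refine ⟨N', fun n hn => ?_⟩
  have h2 : -w ≤ -Z n := h n hn
  linarith

lemma lemDownMult14 (Z : ℕ → ℝ) (w δ : ℝ) (hδ : 0 < δ) (N : ℕ) (hN1 : 1 ≤ N)
    (hpos : ∀ n, N ≤ n → 0 < Z n)
    (hstay : ∀ n, N ≤ n → w ≤ Z n → w ≤ Z (n + 1))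
    (hgrow : ∀ n, N ≤ n → Z n < w → Z n * (1 + δ / n) ≤ Z (n + 1)) :
    ∃ N', ∀ n, N' ≤ n → w ≤ Z n := by
  have h0 : ∃ n₀, N ≤ n₀ ∧ w ≤ Z n₀ := by
    by_contra h
    push_neg at h
    have hmono : ∀ n, N ≤ n → Z N ≤ Z n := by
      intro n hn
      induction n, hn using Nat.le_induction with
      | base => exact le_rfl
      | succ n hn ih =>
        have h1 := hgrow n hn (h n hn)
        have h2 := hpos n hn
        have hn0 : (0 : ℝ) < n := by
          have : (1 : ℕ) ≤ n := hN1.trans hn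
          exact_mod_cast Nat.lt_of_lt_of_le Nat.zero_lt_one this
        nlinarith [div_nonneg hδ.le hn0.le]
    apply lemA14 Z w (δ * Z N) (mul_pos hδ (hpos N le_rfl)) N hN1 ?_ (fun n hn => (h n hn).le)
    intro n hn
    have h1 := hgrow n hn (h n hn)
    have h2 := hmono n hn
    have hn0 : (0 : ℝ) < n := by
      have : (1 : ℕ) ≤ n := hN1.trans hn
      exact_mod_cast Nat.lt_of_lt_of_le Nat.zero_lt_one this
    have h4 : (0:ℝ) ≤ (Z n - Z N) * δ * ((n:ℝ))⁻¹ :=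
      mul_nonneg (mul_nonneg (by linarith) hδ.le) (by positivity)
    have h5 : δ * Z N / (n:ℝ) = δ * Z N * ((n:ℝ))⁻¹ := by rw [div_eq_mul_inv]
    have h6 : Z n * (1 + δ / (n:ℝ)) = Z n + Z n * δ * ((n:ℝ))⁻¹ := by
      rw [div_eq_mul_inv]; ring
    linarith
  obtain ⟨n₀, hn₀, hw⟩ := h0
  refine ⟨n₀, fun n hn => ?_⟩
  induction n, hn using Nat.le_induction with
  | base => exact hw
  | succ n hn ih => exact hstay n (hn₀.trans hn) ih


set_option maxHeartbeats 1000000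


theorem stmt14 (α : ℝ) (hα : 0 < α) (A : EReal) (hA : (1 / α : ℝ) < A)
    (q : ℝ → ℝ) (hq0 : q 0 = 0) (hqnonneg : ∀ y, 0 ≤ y → 0 ≤ q y)
    (hqmono : MonotoneOn q (Set.Ici 0))
    (hqstrict : StrictMonoOn q {y : ℝ | 0 < y ∧ (y : EReal) < A})
    (hqdiff : ∀ y : ℝ, 0 < y → (y : EReal) < A → DifferentiableAt ℝ q y)
    (Q : ℝ → ℝ)
    (hQ : ∀ y, Q y = (∫ u in (0:ℝ)..y, q u) + (1 / α - y) * q y)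
    (b : ℝ) (hb1 : 1 / α < b) (hbA : (b : EReal) < A) (hQb : Q b = 0)
    (hbuniq : ∀ b' : ℝ, 0 < b' → Q b' = 0 → b' = b)
    (m : ℕ) (hm : 1 ≤ m) (c : ℝ) (hc : 0 < c)
    (Z : ℕ → ℝ) (hZm : Z m = c)
    (hZrec : ∀ n ≥ m, ((n : ℝ) / (n + 1)) ^ (1 / α) * Z (n + 1) =
      (1 / n) * ∫ y in (0:ℝ)..(n : ℝ), min (q y) (Z n)) :
    Filter.Tendsto Z Filter.atTop (nhds (q b)) := by
  set β : ℝ := 1 / α with hβdef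
  have hβ : 0 < β := by positivity
  have hbpos : 0 < b := hβ.trans hb1
  have hqcont : ∀ y : ℝ, 0 < y → (y : EReal) < A → ContinuousAt q y :=
    fun y h1 h2 => (hqdiff y h1 h2).continuousAt
  have hqpos : ∀ y : ℝ, 0 < y → (y : EReal) < A → 0 < q y := by
    intro y h1 h2
    have hy2 : (0:ℝ) < y / 2 := by linarith
    have hy2A : ((y/2 : ℝ) : EReal) < A := lt_trans (EReal.coe_lt_coe_iff.mpr (by linarith)) h2
    have hs := hqstrict (Set.mem_setOf.mpr ⟨hy2, hy2A⟩) (Set.mem_setOf.mpr ⟨h1, h2⟩)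
      (by linarith : y/2 < y)
    have := hqnonneg (y/2) hy2.le
    linarith
  -- integrability
  have hsub : ∀ a c' : ℝ, 0 ≤ a → 0 ≤ c' → Set.uIcc a c' ⊆ Set.Ici 0 := by
    intro a c' ha hc' x hx
    rcases Set.mem_uIcc.mp hx with ⟨h1, _⟩ | ⟨h1, _⟩ <;> exact le_trans (by assumption) h1
  have hIntQ : ∀ a c' : ℝ, 0 ≤ a → 0 ≤ c' → IntervalIntegrable q volume a c' := by
    intro a c' ha hc'
    exact MonotoneOn.intervalIntegrable (hqmono.mono (hsub a c' ha hc'))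
  have hIntMin : ∀ (z a c' : ℝ), 0 ≤ a → 0 ≤ c' →
      IntervalIntegrable (fun y => min (q y) z) volume a c' := by
    intro z a c' ha hc'
    apply MonotoneOn.intervalIntegrable
    intro x hx y hy hxy
    exact min_le_min (hqmono (hsub a c' ha hc' hx) (hsub a c' ha hc' hy) hxy) le_rfl
  have hIntMax : ∀ (z a c' : ℝ), 0 ≤ a → 0 ≤ c' →
      IntervalIntegrable (fun y => max (z - q y) 0) volume a c' := by
    intro z a c' ha hc'
    apply AntitoneOn.intervalIntegrable
    intro x hx y hy hxy
    exact max_le_max (by have := hqmono (hsub a c' ha hc' hx) (hsub a c' ha hc' hy) hxy; linarith)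
      le_rfl
  -- recursion in usable form
  have hrec : ∀ n, m ≤ n → Z (n+1) =
      (1 + 1/(n:ℝ)) ^ β * ((1/(n:ℝ)) * ∫ y in (0:ℝ)..(n:ℝ), min (q y) (Z n)) := by
    intro n hn
    have hn1 : (1:ℝ) ≤ (n:ℝ) := by exact_mod_cast hm.trans hn
    have hn0 : (0:ℝ) < (n:ℝ) := by linarith
    have hx : (0:ℝ) < (n:ℝ)/((n:ℝ)+1) := by positivity
    have h := hZrec n hn
    have hne : ((n:ℝ)/((n:ℝ)+1)) ^ β ≠ 0 := ne_of_gt (Real.rpow_pos_of_pos hx β)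
    have h2 : Z (n+1) = (((n:ℝ)/((n:ℝ)+1)) ^ β)⁻¹ *
        ((1/(n:ℝ)) * ∫ y in (0:ℝ)..(n:ℝ), min (q y) (Z n)) := by
      rw [← h, ← mul_assoc, inv_mul_cancel₀ hne, one_mul]
    rw [h2, ← Real.inv_rpow hx.le, inv_div]
    congr 2
    field_simp
  -- limit of n((1+1/n)^β - 1)
  have hrlim : Tendsto (fun n : ℕ => (n:ℝ) * ((1 + 1/(n:ℝ)) ^ β - 1)) atTop (nhds β) := by
    have hder : HasDerivAt (fun x : ℝ => (1 + x) ^ β) β 0 := by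
      have h1 : HasDerivAt (fun x : ℝ => x ^ β) (β * (1:ℝ) ^ (β - 1)) 1 :=
        Real.hasDerivAt_rpow_const (Or.inl one_ne_zero)
      have h2 : HasDerivAt (fun x : ℝ => 1 + x) 1 0 := by
        simpa using (hasDerivAt_id (0:ℝ)).const_add 1
      have h1' : HasDerivAt (fun x : ℝ => x ^ β) (β * (1:ℝ) ^ (β - 1)) ((fun x : ℝ => 1 + x) 0) := by
        simpa using h1
      have h3 := h1'.comp (0:ℝ) h2
      have h4 := h3
      simp only [Real.one_rpow, mul_one] at h4
      exact h4
    have hslope := hasDerivAt_iff_tendsto_slope.mp hder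
    have h1n : Tendsto (fun n : ℕ => 1/(n:ℝ)) atTop (nhdsWithin 0 {x | x ≠ 0}) := by
      apply tendsto_nhdsWithin_of_tendsto_nhds_of_eventually_within
      · exact tendsto_one_div_atTop_nhds_zero_nat
      · filter_upwards [eventually_gt_atTop 0] with n hn
        have : (0:ℝ) < 1/(n:ℝ) := by positivity
        exact this.ne'
    have hcomp := hslope.comp h1n
    apply hcomp.congr'
    filter_upwards [eventually_gt_atTop 0] with n hn
    have hn0 : (0:ℝ) < (n:ℝ) := by exact_mod_cast hn
    show slope (fun x : ℝ => (1 + x) ^ β) 0 (1/(n:ℝ)) = (n:ℝ) * ((1 + 1/(n:ℝ)) ^ β - 1)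
    rw [slope_def_field]
    have h1 : ((1:ℝ) + 0) ^ β = 1 := by norm_num [Real.one_rpow]
    rw [h1, sub_zero]
    field_simp
  -- r_n -> 1
  have hr1 : Tendsto (fun n : ℕ => (1 + 1/(n:ℝ)) ^ β) atTop (nhds 1) := by
    have h0 : Tendsto (fun n : ℕ => (n:ℝ) * ((1 + 1/(n:ℝ)) ^ β - 1) * (1/(n:ℝ))) atTop
        (nhds (β * 0)) := hrlim.mul tendsto_one_div_atTop_nhds_zero_nat
    rw [mul_zero] at h0
    have h1 : Tendsto (fun n : ℕ => 1 + (n:ℝ) * ((1 + 1/(n:ℝ)) ^ β - 1) * (1/(n:ℝ))) atTop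
        (nhds (1 + 0)) := tendsto_const_nhds.add h0
    rw [add_zero] at h1
    apply h1.congr'
    filter_upwards [eventually_gt_atTop 0] with n hn
    have hn0 : (0:ℝ) < (n:ℝ) := by exact_mod_cast hn
    field_simp
    ring
  -- positivity of Z
  have hyp0 : (0:ℝ) < min β 1 / 2 := by positivity
  have hypA : ((min β 1 / 2 : ℝ) : EReal) < A := by
    refine lt_trans (EReal.coe_lt_coe_iff.mpr ?_) hA
    have : min β 1 ≤ β := min_le_left _ _
    linarith
  have hqyp : 0 < q (min β 1 / 2) := hqpos _ hyp0 hypA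
  have hZpos : ∀ n, m ≤ n → 0 < Z n := by
    intro n hn
    induction n, hn using Nat.le_induction with
    | base => rw [hZm]; exact hc
    | succ n hn ih =>
      have hn1 : (1:ℝ) ≤ (n:ℝ) := by exact_mod_cast hm.trans hn
      have hn0 : (0:ℝ) < (n:ℝ) := by linarith
      set yp := min β 1 / 2 with hypdef
      have hypn : yp ≤ (n:ℝ) := by
        have : min β 1 ≤ 1 := min_le_right _ _
        simp only [hypdef]; linarith
      have hs : (∫ y in (0:ℝ)..(n:ℝ), min (q y) (Z n)) =
          (∫ y in (0:ℝ)..yp, min (q y) (Z n)) + ∫ y in yp..(n:ℝ), min (q y) (Z n) :=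
        (integral_add_adjacent_intervals (hIntMin _ _ _ le_rfl hyp0.le)
          (hIntMin _ _ _ hyp0.le hn0.le)).symm
      have hb1' : (0:ℝ) ≤ ∫ y in (0:ℝ)..yp, min (q y) (Z n) := by
        apply intervalIntegral.integral_nonneg hyp0.le
        intro y hy
        exact le_min (hqnonneg y hy.1) ih.le
      have hb2 : ((n:ℝ) - yp) * min (q yp) (Z n) ≤ ∫ y in yp..(n:ℝ), min (q y) (Z n) := by
        have h := intervalIntegral.integral_mono_on (f := fun _ : ℝ => min (q yp) (Z n))
          (g := fun y => min (q y) (Z n)) hypn intervalIntegrable_const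
          (hIntMin (Z n) _ _ hyp0.le hn0.le)
          (fun y hy => min_le_min (hqmono (Set.mem_Ici.mpr hyp0.le)
            (Set.mem_Ici.mpr (hyp0.le.trans hy.1)) hy.1) le_rfl)
        rwa [intervalIntegral.integral_const, smul_eq_mul] at h
      have hminpos : 0 < min (q yp) (Z n) := lt_min hqyp ih
      have hI : 0 < ∫ y in (0:ℝ)..(n:ℝ), min (q y) (Z n) := by
        rw [hs]
        have : 0 < ((n:ℝ) - yp) * min (q yp) (Z n) := by
          apply mul_pos ?_ hminpos
          have : min β 1 ≤ 1 := min_le_right _ _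
          simp only [hypdef]; linarith
        linarith
      rw [hrec n hn]
      have hr : (0:ℝ) < (1 + 1/(n:ℝ)) ^ β := Real.rpow_pos_of_pos (by positivity) β
      positivity
  -- derivative of Q
  have hQderiv : ∀ y : ℝ, 0 < y → (y : EReal) < A → HasDerivAt Q ((β - y) * deriv q y) y := by
    intro y hy hyA
    obtain ⟨t, hyt, htA⟩ := exists_between hyA
    have ht_top : t ≠ ⊤ := (htA.trans_le le_top).ne
    have ht_bot : t ≠ ⊥ := (lt_of_le_of_lt bot_le hyt).ne'
    have hT'coe : ((t.toReal : ℝ) : EReal) = t := EReal.coe_toReal ht_top ht_bot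
    have hyT' : y < t.toReal := by
      rw [← EReal.coe_lt_coe_iff, hT'coe]; exact hyt
    have hcontOn : ContinuousOn q (Set.Ioo 0 t.toReal) := by
      intro x hx
      have hxA : ((x:ℝ) : EReal) < A := by
        refine lt_trans ?_ htA
        rw [← hT'coe]
        exact EReal.coe_lt_coe_iff.mpr hx.2
      exact ((hqdiff x hx.1 hxA).continuousAt).continuousWithinAt
    have hmeasat : StronglyMeasurableAtFilter q (nhds y) volume :=
      ⟨Set.Ioo 0 t.toReal, Ioo_mem_nhds hy hyT',
        hcontOn.aestronglyMeasurable measurableSet_Ioo⟩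
    have hFTC : HasDerivAt (fun s => ∫ u in (0:ℝ)..s, q u) (q y) y :=
      intervalIntegral.integral_hasDerivAt_right (hIntQ 0 y le_rfl hy.le) hmeasat
        (hqcont y hy hyA)
    have hprod : HasDerivAt (fun x => (β - x) * q x)
        ((-1) * q y + (β - y) * deriv q y) y :=
      HasDerivAt.mul (by simpa using (hasDerivAt_id y).const_sub β)
        ((hqdiff y hy hyA).hasDerivAt)
    have hsum := hFTC.add hprod
    have hQfun : Q = fun y => (∫ u in (0:ℝ)..y, q u) + (β - y) * q y := funext hQ
    rw [hQfun]
    exact hsum.congr_deriv (by ring)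
  -- deriv q nonneg
  have hdq : ∀ y : ℝ, 0 < y → (y : EReal) < A → 0 ≤ deriv q y := by
    intro y hy hyA
    have hd := (hqdiff y hy hyA).hasDerivAt
    have hs := hasDerivAt_iff_tendsto_slope.mp hd
    have hs' : Tendsto (slope q y) (nhdsWithin y (Set.Ioi y)) (nhds (deriv q y)) :=
      hs.mono_left (nhdsWithin_mono _ (fun x hx => ne_of_gt hx))
    apply ge_of_tendsto hs'
    filter_upwards [self_mem_nhdsWithin] with x hx
    rw [slope_def_field]
    apply div_nonneg ?_ (by simp at hx; linarith)
    have : q y ≤ q x := hqmono (Set.mem_Ici.mpr hy.le)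
      (Set.mem_Ici.mpr (hy.le.trans (le_of_lt hx))) (le_of_lt hx)
    linarith
  -- Q antitone past β
  have hQanti : ∀ u v : ℝ, β ≤ u → u ≤ v → ((v:ℝ) : EReal) < A → Q v ≤ Q u := by
    intro u v hu huv hvA
    have h0u : 0 < u := lt_of_lt_of_le hβ hu
    have hmem : ∀ x ∈ Set.Icc u v, 0 < x ∧ ((x:ℝ) : EReal) < A := by
      intro x hx
      exact ⟨lt_of_lt_of_le h0u hx.1,
        lt_of_le_of_lt (EReal.coe_le_coe_iff.mpr hx.2) hvA⟩
    have hanti : AntitoneOn Q (Set.Icc u v) := by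
      apply antitoneOn_of_deriv_nonpos (convex_Icc u v)
      · intro x hx
        exact ((hQderiv x (hmem x hx).1 (hmem x hx).2).continuousAt).continuousWithinAt
      · intro x hx
        rw [interior_Icc] at hx
        exact ((hQderiv x (hmem x (Set.Ioo_subset_Icc_self hx)).1
          (hmem x (Set.Ioo_subset_Icc_self hx)).2).differentiableAt).differentiableWithinAt
      · intro x hx
        rw [interior_Icc] at hx
        have h1 := (hmem x (Set.Ioo_subset_Icc_self hx))
        rw [(hQderiv x h1.1 h1.2).deriv]
        apply mul_nonpos_of_nonpos_of_nonneg
        · linarith [hx.1, hu]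
        · exact hdq x h1.1 h1.2
    exact hanti (Set.mem_Icc.mpr ⟨le_rfl, huv⟩) (Set.mem_Icc.mpr ⟨huv, le_rfl⟩) huv
  have hQpos : ∀ T : ℝ, β < T → T < b → 0 < Q T := by
    intro T h1 h2
    have h0T : 0 < T := hβ.trans h1
    have h := hQanti T b h1.le h2.le hbA
    rw [hQb] at h
    rcases h.lt_or_eq with h' | h'
    · exact h'
    · exact absurd (hbuniq T h0T h'.symm) (ne_of_lt h2)
  have hQneg : ∀ T : ℝ, b < T → ((T:ℝ) : EReal) < A → Q T < 0 := by
    intro T h1 h1A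
    have h := hQanti b T hb1.le h1.le h1A
    rw [hQb] at h
    rcases h.lt_or_eq with h' | h'
    · exact h'
    · exact absurd (hbuniq T (hbpos.trans h1) h') (ne_of_gt h1)
  -- monotonicity of the integral in z
  have hImono : ∀ t z w : ℝ, 0 ≤ t → z ≤ w →
      (∫ y in (0:ℝ)..t, min (q y) z) ≤ ∫ y in (0:ℝ)..t, min (q y) w := by
    intro t z w ht hzw
    apply intervalIntegral.integral_mono_on ht (hIntMin z 0 t le_rfl ht)
      (hIntMin w 0 t le_rfl ht)
    intro y hy
    exact min_le_min le_rfl hzw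
  -- the main ε-argument
  rw [Metric.tendsto_atTop]
  intro ε hε
  obtain ⟨δq, hδq, hqnear⟩ := Metric.continuousAt_iff.mp (hqcont b hbpos hbA) ε hε
  obtain ⟨t, hbt, htA⟩ := exists_between hbA
  have ht_top : t ≠ ⊤ := (htA.trans_le le_top).ne
  have ht_bot : t ≠ ⊥ := (lt_of_le_of_lt bot_le hbt).ne'
  have hBcoe : ((t.toReal : ℝ) : EReal) = t := EReal.coe_toReal ht_top ht_bot
  set B := t.toReal with hBdef
  have hbB : b < B := by rw [← EReal.coe_lt_coe_iff, hBcoe]; exact hbt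
  set Tp := min ((b+B)/2) (b + δq/2) with hTpdef
  have hbTp : b < Tp := lt_min (by linarith) (by linarith)
  have hTp0 : 0 < Tp := hbpos.trans hbTp
  have hTpA : ((Tp:ℝ) : EReal) < A := by
    have h1 : Tp < B := lt_of_le_of_lt (min_le_left _ _) (by linarith)
    calc ((Tp:ℝ) : EReal) < ((B:ℝ) : EReal) := EReal.coe_lt_coe_iff.mpr h1
    _ = t := hBcoe
    _ < A := htA
  set wp := q Tp with hwpdef
  have hwp0 : 0 < wp := hqpos Tp hTp0 hTpA
  have hqTp : wp < q b + ε := by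
    have hd : dist Tp b < δq := by
      rw [Real.dist_eq, abs_of_pos (by linarith)]
      have : Tp ≤ b + δq/2 := min_le_right _ _
      linarith
    have := hqnear hd
    rw [Real.dist_eq] at this
    have := abs_lt.mp this
    linarith [this.2]
  set Tm := max ((β+b)/2) (b - δq/2) with hTmdef
  have hβTm : β < Tm := lt_of_lt_of_le (by linarith) (le_max_left _ _)
  have hTmb : Tm < b := max_lt (by linarith) (by linarith)
  have hTm0 : 0 < Tm := hβ.trans hβTm
  have hTmA : ((Tm:ℝ) : EReal) < A := lt_trans (EReal.coe_lt_coe_iff.mpr hTmb) hbA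
  set w' := q Tm with hw'def
  have hqTm : q b - ε < w' := by
    have hd : dist Tm b < δq := by
      rw [Real.dist_eq, abs_of_nonpos (by linarith)]
      have : b - δq/2 ≤ Tm := le_max_right _ _
      linarith
    have := hqnear hd
    rw [Real.dist_eq] at this
    have := abs_lt.mp this
    linarith [this.1]
  have hy0A : ((β/2 : ℝ) : EReal) < A := lt_trans (EReal.coe_lt_coe_iff.mpr (by linarith)) hA
  set z₀ := q (β/2) with hz₀def
  have hz₀ : 0 < z₀ := hqpos _ (by linarith) hy0A
  have hz₀w' : z₀ < w' := hqstrict (Set.mem_setOf.mpr ⟨by linarith, hy0A⟩)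
    (Set.mem_setOf.mpr ⟨hTm0, hTmA⟩) (by linarith)
  have hw'0 : 0 < w' := hz₀.trans hz₀w'
  have hw'L : w' < q b := hqstrict (Set.mem_setOf.mpr ⟨hTm0, hTmA⟩)
    (Set.mem_setOf.mpr ⟨hbpos, hbA⟩) hTmb
  have hQTm : 0 < Q Tm := hQpos Tm hβTm hTmb
  have hQTp : Q Tp < 0 := hQneg Tp hbTp hTpA
  set δu := -(Q Tp)/2 with hδudef
  have hδu : 0 < δu := by simp only [hδudef]; linarith
  set Cqp := ∫ u in (0:ℝ)..Tp, q u with hCqpdef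
  set Cqm := ∫ u in (0:ℝ)..Tm, q u with hCqmdef
  set γ := Q Tm / (2 * w') with hγdef
  have hγ : 0 < γ := by positivity
  set δd := z₀ * γ with hδddef
  have hδd : 0 < δd := mul_pos hz₀ hγ
  -- UPPER drift
  have hU : ∀ᶠ n : ℕ in atTop, m ≤ n ∧ ∀ z : ℝ, wp ≤ z →
      (1 + 1/(n:ℝ)) ^ β * ((1/(n:ℝ)) * ∫ y in (0:ℝ)..(n:ℝ), min (q y) z)
        ≤ z - δu / (n:ℝ) := by
    have hQTpform : Q Tp = Cqp + (β - Tp) * wp := hQ Tp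
    have hlim : Tendsto (fun n : ℕ => (1 + 1/(n:ℝ)) ^ β * Cqp +
        ((n:ℝ) * ((1 + 1/(n:ℝ)) ^ β - 1) - (1 + 1/(n:ℝ)) ^ β * Tp) * wp + δu) atTop
        (nhds (1 * Cqp + (β - 1 * Tp) * wp + δu)) :=
      (((hr1.mul_const Cqp).add (((hrlim.sub (hr1.mul_const Tp)).mul_const wp))).add
        tendsto_const_nhds)
    have hval : 1 * Cqp + (β - 1 * Tp) * wp + δu = Q Tp / 2 := by
      simp only [hδudef]; rw [hQTpform]; ring
    rw [hval] at hlim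
    have hφ := hlim.eventually_lt_const (by linarith : Q Tp / 2 < 0)
    have hcoef : ∀ᶠ n : ℕ in atTop,
        (n:ℝ) * ((1 + 1/(n:ℝ)) ^ β - 1) - (1 + 1/(n:ℝ)) ^ β * Tp < 0 :=
      (hrlim.sub (hr1.mul_const Tp)).eventually_lt_const (by linarith : β - 1 * Tp < 0)
    filter_upwards [hφ, hcoef, eventually_ge_atTop m,
      tendsto_natCast_atTop_atTop.eventually_ge_atTop Tp] with n h3 h4 hmn hTn
    refine ⟨hmn, fun z hz => ?_⟩
    have hn1 : (1:ℝ) ≤ (n:ℝ) := by exact_mod_cast hm.trans hmn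
    have hn0 : (0:ℝ) < (n:ℝ) := by linarith
    set r := (1 + 1/(n:ℝ)) ^ β with hrdef
    have hr0 : 0 < r := Real.rpow_pos_of_pos (by positivity) β
    have hz0 : 0 ≤ z := (hwp0.le.trans hz)
    have hIsplit : (∫ y in (0:ℝ)..(n:ℝ), min (q y) z) =
        (∫ y in (0:ℝ)..Tp, min (q y) z) + ∫ y in Tp..(n:ℝ), min (q y) z :=
      (integral_add_adjacent_intervals (hIntMin z 0 Tp le_rfl hTp0.le)
        (hIntMin z Tp (n:ℝ) hTp0.le hn0.le)).symm
    have hI1 : (∫ y in (0:ℝ)..Tp, min (q y) z) ≤ Cqp := by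
      apply intervalIntegral.integral_mono_on hTp0.le (hIntMin z 0 Tp le_rfl hTp0.le)
        (hIntQ 0 Tp le_rfl hTp0.le)
      intro y hy
      exact min_le_left _ _
    have hI2 : (∫ y in Tp..(n:ℝ), min (q y) z) ≤ ((n:ℝ) - Tp) * z := by
      have h := intervalIntegral.integral_mono_on (f := fun y => min (q y) z)
        (g := fun _ : ℝ => z) hTn (hIntMin z Tp (n:ℝ) hTp0.le hn0.le)
        intervalIntegrable_const (fun y hy => min_le_right _ _)
      rwa [intervalIntegral.integral_const, smul_eq_mul] at h
    have hIle : (∫ y in (0:ℝ)..(n:ℝ), min (q y) z) ≤ Cqp + ((n:ℝ) - Tp) * z := by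
      rw [hIsplit]; linarith
    have hmul : ((n:ℝ) * (r - 1) - r * Tp) * (z - wp) ≤ 0 :=
      mul_nonpos_of_nonpos_of_nonneg h4.le (by linarith)
    have key : r * (Cqp + ((n:ℝ) - Tp) * z) ≤ (n:ℝ) * z - δu := by
      have expand : r * (Cqp + ((n:ℝ) - Tp) * z) - ((n:ℝ) * z - δu) =
          (r * Cqp + ((n:ℝ) * (r - 1) - r * Tp) * wp + δu) +
            ((n:ℝ) * (r - 1) - r * Tp) * (z - wp) := by ring
      linarith [h3, hmul, expand]
    calc r * ((1/(n:ℝ)) * ∫ y in (0:ℝ)..(n:ℝ), min (q y) z)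
        = (1/(n:ℝ)) * (r * ∫ y in (0:ℝ)..(n:ℝ), min (q y) z) := by ring
    _ ≤ (1/(n:ℝ)) * (r * (Cqp + ((n:ℝ) - Tp) * z)) :=
        mul_le_mul_of_nonneg_left (mul_le_mul_of_nonneg_left hIle hr0.le)
          (one_div_nonneg.mpr hn0.le)
    _ ≤ (1/(n:ℝ)) * ((n:ℝ) * z - δu) :=
        mul_le_mul_of_nonneg_left key (one_div_nonneg.mpr hn0.le)
    _ = z - δu/(n:ℝ) := by field_simp
  -- apply lemUp
  obtain ⟨NU0, hNU0⟩ := Filter.eventually_atTop.mp hU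
  have hUP : ∃ N', ∀ n, N' ≤ n → Z n ≤ wp := by
    apply lemUp14 Z wp δu hδu (max NU0 1) (le_max_right _ _)
    · intro n hn hZn
      have h := hNU0 n (le_trans (le_max_left _ _) hn)
      have hmn := h.1
      have hcore := h.2 wp le_rfl
      have hn1 : (1:ℝ) ≤ (n:ℝ) := by exact_mod_cast hm.trans hmn
      have hn0 : (0:ℝ) < (n:ℝ) := by linarith
      have hr0 : (0:ℝ) < (1 + 1/(n:ℝ)) ^ β := Real.rpow_pos_of_pos (by positivity) β
      rw [hrec n hmn]
      have hmono := hImono (n:ℝ) (Z n) wp hn0.le hZn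
      have : (1 + 1/(n:ℝ)) ^ β * ((1/(n:ℝ)) * ∫ y in (0:ℝ)..(n:ℝ), min (q y) (Z n)) ≤
          (1 + 1/(n:ℝ)) ^ β * ((1/(n:ℝ)) * ∫ y in (0:ℝ)..(n:ℝ), min (q y) wp) :=
        mul_le_mul_of_nonneg_left
          (mul_le_mul_of_nonneg_left hmono (one_div_nonneg.mpr hn0.le)) hr0.le
      have hδun : 0 ≤ δu / (n:ℝ) := div_nonneg hδu.le hn0.le
      linarith
    · intro n hn hZn
      have h := hNU0 n (le_trans (le_max_left _ _) hn)
      have hmn := h.1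
      have hcore := h.2 (Z n) hZn.le
      rw [hrec n hmn]
      exact hcore
  -- GROWTH stage: eventually Z n ≥ z₀
  have hG : ∀ᶠ n : ℕ in atTop, m ≤ n ∧ ∀ z : ℝ, 0 < z → z ≤ z₀ →
      z * (1 + (β/4)/(n:ℝ)) ≤
        (1 + 1/(n:ℝ)) ^ β * ((1/(n:ℝ)) * ∫ y in (0:ℝ)..(n:ℝ), min (q y) z) := by
    have hψ : ∀ᶠ n : ℕ in atTop,
        β/4 < (n:ℝ) * ((1 + 1/(n:ℝ)) ^ β - 1) - (1 + 1/(n:ℝ)) ^ β * (β/2) :=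
      (hrlim.sub (hr1.mul_const (β/2))).eventually_const_lt (by linarith : β/4 < β - 1 * (β/2))
    filter_upwards [hψ, eventually_ge_atTop m,
      tendsto_natCast_atTop_atTop.eventually_ge_atTop (β/2)] with n hψn hmn hyn
    refine ⟨hmn, fun z hz0 hzz₀ => ?_⟩
    have hn1 : (1:ℝ) ≤ (n:ℝ) := by exact_mod_cast hm.trans hmn
    have hn0 : (0:ℝ) < (n:ℝ) := by linarith
    set r := (1 + 1/(n:ℝ)) ^ β with hrdef
    have hr0 : 0 < r := Real.rpow_pos_of_pos (by positivity) β
    have hIsplit : (∫ y in (0:ℝ)..(n:ℝ), min (q y) z) =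
        (∫ y in (0:ℝ)..(β/2), min (q y) z) + ∫ y in (β/2)..(n:ℝ), min (q y) z :=
      (integral_add_adjacent_intervals (hIntMin z 0 (β/2) le_rfl (by linarith))
        (hIntMin z (β/2) (n:ℝ) (by linarith) hn0.le)).symm
    have hI1 : (0:ℝ) ≤ ∫ y in (0:ℝ)..(β/2), min (q y) z := by
      apply intervalIntegral.integral_nonneg (by linarith)
      intro y hy
      exact le_min (hqnonneg y hy.1) hz0.le
    have hI2 : ((n:ℝ) - β/2) * z ≤ ∫ y in (β/2)..(n:ℝ), min (q y) z := by
      have h := intervalIntegral.integral_mono_on (f := fun _ : ℝ => z)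
        (g := fun y => min (q y) z) hyn intervalIntegrable_const
        (hIntMin z (β/2) (n:ℝ) (by linarith) hn0.le) ?_
      · rwa [intervalIntegral.integral_const, smul_eq_mul] at h
      · intro y hy
        refine le_min ?_ le_rfl
        calc z ≤ z₀ := hzz₀
        _ ≤ q y := hqmono (Set.mem_Ici.mpr (by linarith))
            (Set.mem_Ici.mpr ((by linarith : (0:ℝ) ≤ β/2).trans hy.1)) hy.1
    have hIge : ((n:ℝ) - β/2) * z ≤ ∫ y in (0:ℝ)..(n:ℝ), min (q y) z := by
      rw [hIsplit]; linarith
    have h5' : (n:ℝ) + β/4 ≤ (n:ℝ) * r - r * (β/2) := by linarith [hψn]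
    have h5 : z * ((n:ℝ) + β/4) ≤ z * ((n:ℝ) * r - r * (β/2)) :=
      mul_le_mul_of_nonneg_left h5' hz0.le
    calc z * (1 + (β/4)/(n:ℝ)) = (1/(n:ℝ)) * (z * ((n:ℝ) + β/4)) := by field_simp
    _ ≤ (1/(n:ℝ)) * (z * ((n:ℝ) * r - r * (β/2))) :=
        mul_le_mul_of_nonneg_left h5 (one_div_nonneg.mpr hn0.le)
    _ = r * ((1/(n:ℝ)) * (((n:ℝ) - β/2) * z)) := by ring
    _ ≤ r * ((1/(n:ℝ)) * ∫ y in (0:ℝ)..(n:ℝ), min (q y) z) :=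
        mul_le_mul_of_nonneg_left
          (mul_le_mul_of_nonneg_left hIge (one_div_nonneg.mpr hn0.le)) hr0.le
  obtain ⟨NG0, hNG0⟩ := Filter.eventually_atTop.mp hG
  have hGROW : ∃ N', ∀ n, N' ≤ n → z₀ ≤ Z n := by
    apply lemDownMult14 Z z₀ (β/4) (by linarith) (max (max NG0 m) 1) (le_max_right _ _)
    · intro n hn
      exact hZpos n (le_trans (le_max_of_le_left (le_max_right _ _)) hn)
    · intro n hn hZn
      have h := hNG0 n (le_trans (le_max_of_le_left (le_max_left _ _)) hn)
      have hmn := h.1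
      have hcore := h.2 z₀ hz₀ le_rfl
      have hn1 : (1:ℝ) ≤ (n:ℝ) := by exact_mod_cast hm.trans hmn
      have hn0 : (0:ℝ) < (n:ℝ) := by linarith
      have hr0 : (0:ℝ) < (1 + 1/(n:ℝ)) ^ β := Real.rpow_pos_of_pos (by positivity) β
      rw [hrec n hmn]
      have hmono := hImono (n:ℝ) z₀ (Z n) hn0.le hZn
      have hmul : (1 + 1/(n:ℝ)) ^ β * ((1/(n:ℝ)) * ∫ y in (0:ℝ)..(n:ℝ), min (q y) z₀) ≤
          (1 + 1/(n:ℝ)) ^ β * ((1/(n:ℝ)) * ∫ y in (0:ℝ)..(n:ℝ), min (q y) (Z n)) :=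
        mul_le_mul_of_nonneg_left
          (mul_le_mul_of_nonneg_left hmono (one_div_nonneg.mpr hn0.le)) hr0.le
      have h9 : 0 ≤ z₀ * ((β/4)/(n:ℝ)) :=
        mul_nonneg hz₀.le (div_nonneg (by linarith) hn0.le)
      have h10 : z₀ * (1 + (β/4)/(n:ℝ)) = z₀ + z₀ * ((β/4)/(n:ℝ)) := by ring
      linarith
    · intro n hn hZn
      have h := hNG0 n (le_trans (le_max_of_le_left (le_max_left _ _)) hn)
      have hmn := h.1
      have hcore := h.2 (Z n) (hZpos n hmn) hZn.le
      rw [hrec n hmn]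
      exact hcore
  obtain ⟨NG, hNG⟩ := hGROW
  -- DOWN drift stage
  have hD : ∀ᶠ n : ℕ in atTop, m ≤ n ∧ ∀ z : ℝ, z₀ ≤ z → z ≤ w' →
      z + δd/(n:ℝ) ≤
        (1 + 1/(n:ℝ)) ^ β * ((1/(n:ℝ)) * ∫ y in (0:ℝ)..(n:ℝ), min (q y) z) := by
    have hQTmform : Q Tm = Cqm + (β - Tm) * w' := hQ Tm
    have hlim : Tendsto (fun n : ℕ => (n:ℝ) * ((1 + 1/(n:ℝ)) ^ β - 1) -
        (1 + 1/(n:ℝ)) ^ β * ((Tm * w' - Cqm)/w')) atTop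
        (nhds (β - 1 * ((Tm * w' - Cqm)/w'))) := hrlim.sub (hr1.mul_const _)
    have hval : β - 1 * ((Tm * w' - Cqm)/w') = 2 * γ := by
      simp only [hγdef]
      rw [hQTmform]
      field_simp
      ring
    rw [hval] at hlim
    have hχ := hlim.eventually_const_lt (by linarith : γ < 2 * γ)
    filter_upwards [hχ, eventually_ge_atTop m,
      tendsto_natCast_atTop_atTop.eventually_ge_atTop Tm] with n hχn hmn hTmn
    refine ⟨hmn, fun z hz₀z hzw' => ?_⟩
    have hn1 : (1:ℝ) ≤ (n:ℝ) := by exact_mod_cast hm.trans hmn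
    have hn0 : (0:ℝ) < (n:ℝ) := by linarith
    set r := (1 + 1/(n:ℝ)) ^ β with hrdef
    have hr0 : 0 < r := Real.rpow_pos_of_pos (by positivity) β
    have hz0 : 0 < z := lt_of_lt_of_le hz₀ hz₀z
    have hminid : (fun y : ℝ => min (q y) z) = fun y => z - max (z - q y) 0 := by
      funext y
      rcases le_total (q y) z with h | h
      · rw [min_eq_left h, max_eq_left (by linarith)]; ring
      · rw [min_eq_right h, max_eq_right (by linarith)]; ring
    have hJdef : (∫ y in (0:ℝ)..(n:ℝ), min (q y) z) =
        (n:ℝ) * z - ∫ y in (0:ℝ)..(n:ℝ), max (z - q y) 0 := by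
      rw [hminid, intervalIntegral.integral_sub intervalIntegrable_const
        (hIntMax z 0 (n:ℝ) le_rfl hn0.le), intervalIntegral.integral_const, smul_eq_mul,
        sub_zero]
    have hJsplit : (∫ y in (0:ℝ)..(n:ℝ), max (z - q y) 0) =
        (∫ y in (0:ℝ)..Tm, max (z - q y) 0) + ∫ y in Tm..(n:ℝ), max (z - q y) 0 :=
      (integral_add_adjacent_intervals (hIntMax z 0 Tm le_rfl hTm0.le)
        (hIntMax z Tm (n:ℝ) hTm0.le hn0.le)).symm
    have hJ2 : (∫ y in Tm..(n:ℝ), max (z - q y) 0) = 0 := by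
      have heq : Set.EqOn (fun y : ℝ => max (z - q y) 0) (fun _ => (0:ℝ))
          (Set.uIcc Tm (n:ℝ)) := by
        intro y hy
        rw [Set.uIcc_of_le hTmn] at hy
        have h2 : w' ≤ q y :=
          hqmono (Set.mem_Ici.mpr hTm0.le) (Set.mem_Ici.mpr (hTm0.le.trans hy.1)) hy.1
        simp only
        exact max_eq_right (by linarith)
      rw [intervalIntegral.integral_congr heq, intervalIntegral.integral_zero]
    have hJ1 : (∫ y in (0:ℝ)..Tm, max (z - q y) 0) ≤ (z/w') * (Tm * w' - Cqm) := by
      have hptw : ∀ y ∈ Set.Icc (0:ℝ) Tm, max (z - q y) 0 ≤ (z/w') * (w' - q y) := by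
        intro y hy
        have hqy0 : 0 ≤ q y := hqnonneg y hy.1
        have hqyw : q y ≤ w' := hqmono (Set.mem_Ici.mpr hy.1) (Set.mem_Ici.mpr hTm0.le) hy.2
        have hone : z/w' ≤ 1 := (div_le_one hw'0).mpr hzw'
        have heq2 : (z/w') * (w' - q y) = z - (z/w') * q y := by
          field_simp
        have hle : (z/w') * q y ≤ q y := by
          calc (z/w') * q y ≤ 1 * q y :=
            mul_le_mul_of_nonneg_right hone hqy0
          _ = q y := one_mul _
        apply max_le
        · rw [heq2]; linarith
        · exact mul_nonneg (div_nonneg hz0.le hw'0.le) (by linarith)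
      have h := intervalIntegral.integral_mono_on (f := fun y : ℝ => max (z - q y) 0)
        (g := fun y : ℝ => (z/w') * (w' - q y)) hTm0.le (hIntMax z 0 Tm le_rfl hTm0.le)
        ((intervalIntegrable_const.sub (hIntQ 0 Tm le_rfl hTm0.le)).const_mul (z/w')) hptw
      calc (∫ y in (0:ℝ)..Tm, max (z - q y) 0) ≤ ∫ y in (0:ℝ)..Tm, (z/w') * (w' - q y) := h
      _ = (z/w') * ∫ y in (0:ℝ)..Tm, (w' - q y) := intervalIntegral.integral_const_mul _ _
      _ = (z/w') * (Tm * w' - Cqm) := by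
          rw [intervalIntegral.integral_sub intervalIntegrable_const
            (hIntQ 0 Tm le_rfl hTm0.le), intervalIntegral.integral_const, smul_eq_mul,
            sub_zero]
    have hIge : (n:ℝ) * z - (z/w') * (Tm * w' - Cqm) ≤
        ∫ y in (0:ℝ)..(n:ℝ), min (q y) z := by
      rw [hJdef, hJsplit, hJ2, add_zero]
      linarith
    have hw'ne : w' ≠ 0 := hw'0.ne'
    have hkey : δd ≤ z * ((n:ℝ) * (r - 1) - r * ((Tm * w' - Cqm)/w')) := by
      have h1 : γ ≤ (n:ℝ) * (r - 1) - r * ((Tm * w' - Cqm)/w') := hχn.le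
      have h2 := mul_le_mul hz₀z h1 hγ.le hz0.le
      rw [hδddef]
      exact h2
    calc z + δd/(n:ℝ) = (1/(n:ℝ)) * ((n:ℝ) * z + δd) := by field_simp
    _ ≤ (1/(n:ℝ)) * (r * ((n:ℝ) * z - (z/w') * (Tm * w' - Cqm))) := by
        apply mul_le_mul_of_nonneg_left ?_ (one_div_nonneg.mpr hn0.le)
        have e : r * ((n:ℝ) * z - (z/w') * (Tm * w' - Cqm)) - (n:ℝ) * z =
            z * ((n:ℝ) * (r - 1) - r * ((Tm * w' - Cqm)/w')) := by
          field_simp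
          ring
        linarith [hkey]
    _ = r * ((1/(n:ℝ)) * ((n:ℝ) * z - (z/w') * (Tm * w' - Cqm))) := by ring
    _ ≤ r * ((1/(n:ℝ)) * ∫ y in (0:ℝ)..(n:ℝ), min (q y) z) :=
        mul_le_mul_of_nonneg_left
          (mul_le_mul_of_nonneg_left hIge (one_div_nonneg.mpr hn0.le)) hr0.le
  -- apply lemDown for stage 2
  obtain ⟨ND0, hND0⟩ := Filter.eventually_atTop.mp hD
  have hDOWN : ∃ N', ∀ n, N' ≤ n → w' ≤ Z n := by
    apply lemDown14 Z w' δd hδd (max (max ND0 NG) 1) (le_max_right _ _)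
    · intro n hn hZn
      have h := hND0 n (le_trans (le_max_of_le_left (le_max_left _ _)) hn)
      have hmn := h.1
      have hcore := h.2 w' hz₀w'.le le_rfl
      have hn1 : (1:ℝ) ≤ (n:ℝ) := by exact_mod_cast hm.trans hmn
      have hn0 : (0:ℝ) < (n:ℝ) := by linarith
      have hr0 : (0:ℝ) < (1 + 1/(n:ℝ)) ^ β := Real.rpow_pos_of_pos (by positivity) β
      rw [hrec n hmn]
      have hmono := hImono (n:ℝ) w' (Z n) hn0.le hZn
      have hmul : (1 + 1/(n:ℝ)) ^ β * ((1/(n:ℝ)) * ∫ y in (0:ℝ)..(n:ℝ), min (q y) w') ≤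
          (1 + 1/(n:ℝ)) ^ β * ((1/(n:ℝ)) * ∫ y in (0:ℝ)..(n:ℝ), min (q y) (Z n)) :=
        mul_le_mul_of_nonneg_left
          (mul_le_mul_of_nonneg_left hmono (one_div_nonneg.mpr hn0.le)) hr0.le
      have hδdn : 0 ≤ δd / (n:ℝ) := div_nonneg hδd.le hn0.le
      linarith
    · intro n hn hZn
      have h := hND0 n (le_trans (le_max_of_le_left (le_max_left _ _)) hn)
      have hmn := h.1
      have hz₀Zn : z₀ ≤ Z n := hNG n (le_trans (le_max_of_le_left (le_max_right _ _)) hn)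
      have hcore := h.2 (Z n) hz₀Zn hZn.le
      rw [hrec n hmn]
      exact hcore
  -- conclusion
  obtain ⟨NU, hNU⟩ := hUP
  obtain ⟨ND, hND⟩ := hDOWN
  refine ⟨max NU ND, fun n hn => ?_⟩
  have h1 : Z n ≤ wp := hNU n (le_trans (le_max_left _ _) hn)
  have h2 : w' ≤ Z n := hND n (le_trans (le_max_right _ _) hn)
  rw [Real.dist_eq, abs_lt]
  constructor
  · linarith
  · linarith
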